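/- There exists a constant c > 0 such that for all u, w ∈ ℝ^J, the Lorenz 96 bilinear map satisfies ⟨B(u,u), w⟩ ≤ c·‖u‖·‖w‖·‖Πu‖, where ⟨·,·⟩ and ‖·‖ are the Euclidean inner product and norm on ℝ^J. -/

import Mathlib

/-- The symmetric bilinear map of the Lorenz 96 model, with coordinates
indexed cyclically modulo `J`. -/
noncomputable def lorenz96B (J : ℕ) [NeZero J]
    (u v : EuclideanSpace ℝ (Fin J)) : EuclideanSpace ℝ (Fin J) :=
  WithLp.toLp 2 (fun j => (1 / 2) * (v (j - 1) * u (j + 1) + u (j - 1) * v (j + 1)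
    - v (j - 2) * u (j - 1) - u (j - 2) * v (j - 1)))

/-- The orthogonal projection of `ℝ^J` that keeps the coordinates whose
(1-based) index is not divisible by 3 and zeroes out every coordinate whose
(1-based) index is divisible by 3.  (The index `j : Fin J` corresponds to the
1-based coordinate `j + 1`.) -/
noncomputable def lorenz96Proj (J : ℕ)
    (u : EuclideanSpace ℝ (Fin J)) : EuclideanSpace ℝ (Fin J) :=
  WithLp.toLp 2 (fun j => if ((j : ℕ) + 1) % 3 = 0 then 0 else u j)

lemma lorenz96_coord_le_norm {J : ℕ} (u : EuclideanSpace ℝ (Fin J)) (i : Fin J) :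
    |u i| ≤ ‖u‖ := by
  rw [EuclideanSpace.norm_eq, ← Real.sqrt_sq_eq_abs]
  apply Real.sqrt_le_sqrt
  have h := Finset.single_le_sum (f := fun j : Fin J => ‖u j‖ ^ 2)
    (fun j _ => sq_nonneg _) (Finset.mem_univ i)
  simpa [Real.norm_eq_abs, sq_abs] using h

lemma lorenz96_coord_le_proj {J : ℕ} (u : EuclideanSpace ℝ (Fin J)) (i : Fin J)
    (h : (i : ℕ) % 3 ≠ 2) : |u i| ≤ ‖lorenz96Proj J u‖ := by
  have hi : lorenz96Proj J u i = u i := by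
    unfold lorenz96Proj
    show (if ((i : ℕ) + 1) % 3 = 0 then 0 else u i) = u i
    rw [if_neg (by omega)]
  calc |u i| = |lorenz96Proj J u i| := by rw [hi]
    _ ≤ ‖lorenz96Proj J u‖ := lorenz96_coord_le_norm _ i

theorem lorenz96B_inner_le_proj (J J' : ℕ) [NeZero J]
    (hJ3 : J = 3 * J') (hJ4 : 4 ≤ J) :
    ∃ c : ℝ, 0 < c ∧ ∀ u w : EuclideanSpace ℝ (Fin J),
      inner (𝕜 := ℝ) (lorenz96B J u u) w
        ≤ c * ‖u‖ * ‖w‖ * ‖lorenz96Proj J u‖ := by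
  have hJpos : (0 : ℝ) < J := by exact_mod_cast (by omega : 0 < J)
  refine ⟨2 * J, by linarith, fun u w => ?_⟩
  have hdvd : 3 ∣ J := ⟨J', hJ3⟩
  have hone : ((1 : Fin J) : ℕ) = 1 := by
    rw [Fin.val_one' J]; exact Nat.mod_eq_of_lt (by omega)
  have htwo : ((2 : Fin J) : ℕ) = 2 := by
    rw [Fin.coe_ofNat_eq_mod]; exact Nat.mod_eq_of_lt (by omega)
  have hB : ∀ j : Fin J,
      lorenz96B J u u j = u (j - 1) * u (j + 1) - u (j - 2) * u (j - 1) := by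
    intro j; show (1 / 2 : ℝ) * _ = _; ring
  -- pointwise bound on the coordinates of B(u,u)
  have key : ∀ j : Fin J,
      |lorenz96B J u u j| ≤ 2 * ‖u‖ * ‖lorenz96Proj J u‖ := by
    intro j
    rw [hB j]
    set m : ℕ := (j : ℕ) with hm
    have hmlt : m < J := j.isLt
    have e1 : ((j - 1 : Fin J) : ℕ) % 3 = (m + (J - 1)) % 3 := by
      rw [Fin.sub_def, hone, Nat.mod_mod_of_dvd _ hdvd]; omega
    have e2 : ((j + 1 : Fin J) : ℕ) % 3 = (m + 1) % 3 := by
      rw [Fin.add_def, hone, Nat.mod_mod_of_dvd _ hdvd]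
    have e3 : ((j - 2 : Fin J) : ℕ) % 3 = (m + (J - 2)) % 3 := by
      rw [Fin.sub_def, htwo, Nat.mod_mod_of_dvd _ hdvd]; omega
    have habs : |u (j - 1) * u (j + 1) - u (j - 2) * u (j - 1)|
        ≤ |u (j - 1)| * |u (j + 1)| + |u (j - 2)| * |u (j - 1)| := by
      calc |u (j - 1) * u (j + 1) - u (j - 2) * u (j - 1)|
          ≤ |u (j - 1) * u (j + 1)| + |u (j - 2) * u (j - 1)| := abs_sub _ _
        _ = |u (j - 1)| * |u (j + 1)| + |u (j - 2)| * |u (j - 1)| := by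
            rw [abs_mul, abs_mul]
    by_cases hm3 : m % 3 = 0
    · -- j+1 and j-2 have residue 1, so they are kept by the projection
      have hb : |u (j + 1)| ≤ ‖lorenz96Proj J u‖ :=
        lorenz96_coord_le_proj u _ (by omega)
      have hc : |u (j - 2)| ≤ ‖lorenz96Proj J u‖ :=
        lorenz96_coord_le_proj u _ (by omega)
      have ha : |u (j - 1)| ≤ ‖u‖ := lorenz96_coord_le_norm u _
      have h1 : |u (j - 1)| * |u (j + 1)| ≤ ‖u‖ * ‖lorenz96Proj J u‖ :=
        mul_le_mul ha hb (abs_nonneg _) (norm_nonneg _)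
      have h2 : |u (j - 2)| * |u (j - 1)| ≤ ‖lorenz96Proj J u‖ * ‖u‖ :=
        mul_le_mul hc ha (abs_nonneg _) (norm_nonneg _)
      nlinarith [habs]
    · -- j-1 has residue ≠ 2, so it is kept by the projection
      have ha : |u (j - 1)| ≤ ‖lorenz96Proj J u‖ :=
        lorenz96_coord_le_proj u _ (by omega)
      have hb : |u (j + 1)| ≤ ‖u‖ := lorenz96_coord_le_norm u _
      have hc : |u (j - 2)| ≤ ‖u‖ := lorenz96_coord_le_norm u _
      have h1 : |u (j - 1)| * |u (j + 1)| ≤ ‖lorenz96Proj J u‖ * ‖u‖ :=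
        mul_le_mul ha hb (abs_nonneg _) (norm_nonneg _)
      have h2 : |u (j - 2)| * |u (j - 1)| ≤ ‖u‖ * ‖lorenz96Proj J u‖ :=
        mul_le_mul hc ha (abs_nonneg _) (norm_nonneg _)
      nlinarith [habs]
  have hinner : inner (𝕜 := ℝ) (lorenz96B J u u) w
      = ∑ j, lorenz96B J u u j * w j := by
    simp [PiLp.inner_apply, RCLike.inner_apply, mul_comm]
  rw [hinner]
  have hpt : ∀ j ∈ Finset.univ (α := Fin J),
      lorenz96B J u u j * w j ≤ 2 * ‖u‖ * ‖lorenz96Proj J u‖ * ‖w‖ := by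
    intro j _
    calc lorenz96B J u u j * w j ≤ |lorenz96B J u u j * w j| := le_abs_self _
      _ = |lorenz96B J u u j| * |w j| := abs_mul _ _
      _ ≤ (2 * ‖u‖ * ‖lorenz96Proj J u‖) * ‖w‖ :=
          mul_le_mul (key j) (lorenz96_coord_le_norm w j) (abs_nonneg _)
            (by positivity)
  calc ∑ j, lorenz96B J u u j * w j
      ≤ ∑ _j : Fin J, 2 * ‖u‖ * ‖lorenz96Proj J u‖ * ‖w‖ :=
        Finset.sum_le_sum hpt
    _ = (J : ℝ) * (2 * ‖u‖ * ‖lorenz96Proj J u‖ * ‖w‖) := by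
        simp [Finset.sum_const, Finset.card_univ, nsmul_eq_mul]
    _ = 2 * (J : ℝ) * ‖u‖ * ‖w‖ * ‖lorenz96Proj J u‖ := by ring
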